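/- Let f ∈ ℚ⟦X⟧ satisfy constantCoeff f = 1 and f² = 1 + X². Then coeff m f = 0 for every odd m, and for every n ≥ 1 one has (−1)^{n+1} · coeff (2n) f > 0; in particular all coefficients of even index are nonzero. -/

import Mathlib

open PowerSeries Finset

private lemma sum_split_even_odd (g : ℕ → ℚ) (n : ℕ) :
    ∑ i ∈ range (2 * n + 1), g i
      = ∑ k ∈ range (n + 1), g (2 * k) + ∑ k ∈ range n, g (2 * k + 1) := by
  induction n with
  | zero => simp
  | succ n ih =>
    have h1 : 2 * (n + 1) + 1 = (2 * n + 1) + 1 + 1 := by ring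
    rw [h1, Finset.sum_range_succ, Finset.sum_range_succ, ih,
      Finset.sum_range_succ (fun k => g (2 * k)) (n + 1),
      Finset.sum_range_succ (fun k => g (2 * k + 1)) n]
    have e : 2 * (n + 1) = 2 * n + 1 + 1 := by ring
    rw [e]
    ring


/-- If `f ∈ ℚ⟦X⟧` satisfies `constantCoeff f = 1` and `f² = 1 + X²`
(the Taylor series of `√(1+u²)`), then all odd coefficients of `f` vanish, and for
`n ≥ 1` the coefficient of `X^(2n)` has sign `(-1)^(n+1)`; in particular all
even-index coefficients are nonzero. -/
theorem sqrt_one_add_sq_coeffs (f : PowerSeries ℚ)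
    (h0 : constantCoeff f = 1) (h2 : f ^ 2 = 1 + X ^ 2) :
    (∀ m : ℕ, Odd m → coeff m f = 0) ∧
      (∀ n : ℕ, 1 ≤ n → 0 < (-1 : ℚ) ^ (n + 1) * coeff (2 * n) f) ∧
      (∀ n : ℕ, coeff (2 * n) f ≠ 0) := by
  set a : ℕ → ℚ := fun n => coeff n f with ha
  have ha0 : a 0 = 1 := by simpa [ha, PowerSeries.coeff_zero_eq_constantCoeff] using h0
  have key : ∀ n : ℕ, ∑ i ∈ range (n + 1), a i * a (n - i)
      = (if n = 0 then (1:ℚ) else 0) + (if n = 2 then 1 else 0) := by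
    intro n
    have h := congrArg (coeff n) h2
    rw [sq, coeff_mul, Finset.Nat.sum_antidiagonal_eq_sum_range_succ_mk] at h
    simpa [coeff_one, coeff_X_pow] using h
  -- odd coefficients vanish
  have hodd : ∀ m : ℕ, Odd m → a m = 0 := by
    intro m
    induction m using Nat.strong_induction_on with
    | _ m ih =>
      intro hm
      obtain ⟨l, rfl⟩ := hm
      have hk := key (2 * l + 1)
      have h1 : 2 * l + 1 + 1 = (2 * l) + 1 + 1 := by ring
      rw [h1, Finset.sum_range_succ, Finset.sum_range_succ'] at hk
      have hmid : ∀ i ∈ range (2 * l), a (i + 1) * a (2 * l + 1 - (i + 1)) = 0 := by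
        intro i hi
        have hi' : i < 2 * l := Finset.mem_range.mp hi
        rcases Nat.even_or_odd (i + 1) with he | ho
        · -- i+1 even, so 2l+1-(i+1) is odd and < 2l+1
          have hlt : 2 * l + 1 - (i + 1) < 2 * l + 1 := by omega
          have hodd' : Odd (2 * l + 1 - (i + 1)) := by
            obtain ⟨t, ht⟩ := he
            exact ⟨l - t, by omega⟩
          rw [ih _ hlt hodd', mul_zero]
        · have hlt : i + 1 < 2 * l + 1 := by omega
          rw [ih _ hlt ho, zero_mul]
      rw [Finset.sum_eq_zero hmid] at hk
      have : a (2 * l + 1) + a (2 * l + 1) = 0 := by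
        have h0' : (2 * l + 1 : ℕ) ≠ 0 := by omega
        have h2' : (2 * l + 1 : ℕ) ≠ 2 := by omega
        simp only [h0', h2', if_false] at hk
        have e1 : 2 * l + 1 - (2 * l + 1) = 0 := by omega
        have e2 : 2 * l + 1 - 0 = 2 * l + 1 := by omega
        rw [e1, e2, ha0] at hk
        linarith
      linarith
  -- even convolution
  have heven : ∀ n : ℕ, ∑ k ∈ range (n + 1), a (2 * k) * a (2 * (n - k))
      = (if n = 0 then (1:ℚ) else 0) + (if n = 1 then 1 else 0) := by
    intro n
    have hk := key (2 * n)
    rw [sum_split_even_odd (fun i => a i * a (2 * n - i)) n] at hk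
    have hz : ∑ k ∈ range n, a (2 * k + 1) * a (2 * n - (2 * k + 1)) = 0 :=
      Finset.sum_eq_zero fun k _ => by rw [hodd (2 * k + 1) ⟨k, by ring⟩, zero_mul]
    rw [hz, add_zero] at hk
    have he : ∀ k ∈ range (n + 1), a (2 * k) * a (2 * n - 2 * k)
        = a (2 * k) * a (2 * (n - k)) := by
      intro k hk'
      have : 2 * n - 2 * k = 2 * (n - k) := by omega
      rw [this]
    rw [Finset.sum_congr rfl he] at hk
    rw [hk]
    have : (2 * n = 0 ↔ n = 0) := by omega
    have : (2 * n = 2 ↔ n = 1) := by omega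
    congr 1 <;> simp <;> omega
  -- sign of even coefficients
  have hsign : ∀ n : ℕ, 1 ≤ n → 0 < (-1 : ℚ) ^ (n + 1) * a (2 * n) := by
    intro n
    induction n using Nat.strong_induction_on with
    | _ n ih =>
      intro hn
      rcases eq_or_lt_of_le hn with h1 | h1
      · -- n = 1
        have hk := heven 1
        simp only [Finset.sum_range_succ, Finset.sum_range_zero] at hk
        rw [← h1]
        have e0 : (1:ℕ) - 0 = 1 := rfl
        have e1 : (1:ℕ) - 1 = 0 := rfl
        rw [e0, e1] at hk
        simp only [mul_zero, Nat.mul_zero, ha0] at hk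
        norm_num at hk
        have : a 2 = 1 / 2 := by linarith
        norm_num [this]
      · -- n ≥ 2
        obtain ⟨m, rfl⟩ : ∃ m, n = m + 2 := ⟨n - 2, by omega⟩
        set n := m + 2 with hn2
        have hk := heven n
        rw [hn2, Finset.sum_range_succ, Finset.sum_range_succ'] at hk
        rw [← hn2] at hk
        have hn0 : n ≠ 0 := by omega
        have hn1 : n ≠ 1 := by omega
        simp only [hn0, hn1, if_false, Nat.sub_self, Nat.mul_zero, Nat.sub_zero, ha0,
          mul_one, one_mul] at hk
        -- hk : ∑ k ∈ range (n-1), a (2*(k+1)) * a (2*(n-(k+1))) + a (2*n) + a (2*n) = 0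
        set S := ∑ k ∈ range (m + 1), a (2 * (k + 1)) * a (2 * (n - (k + 1))) with hS
        have hSpos : 0 < (-1 : ℚ) ^ n * S := by
          rw [hS, Finset.mul_sum]
          apply Finset.sum_pos
          · intro k hk'
            have hk'' : k < m + 1 := Finset.mem_range.mp hk'
            have p1 : 0 < (-1 : ℚ) ^ (k + 1 + 1) * a (2 * (k + 1)) :=
              ih (k + 1) (by omega) (by omega)
            have p2 : 0 < (-1 : ℚ) ^ (n - (k + 1) + 1) * a (2 * (n - (k + 1))) :=
              ih (n - (k + 1)) (by omega) (by omega)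
            have hmul := mul_pos p1 p2
            have epow : (-1 : ℚ) ^ (k + 1 + 1) * (-1 : ℚ) ^ (n - (k + 1) + 1)
                = (-1 : ℚ) ^ n := by
              rw [← pow_add]
              have : k + 1 + 1 + (n - (k + 1) + 1) = n + 2 := by omega
              rw [this, pow_add]
              norm_num
            calc 0 < (-1 : ℚ) ^ (k + 1 + 1) * a (2 * (k + 1))
                * ((-1 : ℚ) ^ (n - (k + 1) + 1) * a (2 * (n - (k + 1)))) := hmul
              _ = (-1 : ℚ) ^ n * (a (2 * (k + 1)) * a (2 * (n - (k + 1)))) := by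
                  rw [← epow]; ring
          · exact Finset.nonempty_range_iff.mpr (by omega)
        have han : a (2 * n) = -S / 2 := by linarith
        rw [han]
        have : (-1 : ℚ) ^ (n + 1) * (-S / 2) = ((-1 : ℚ) ^ n * S) / 2 := by
          rw [pow_succ]; ring
        rw [this]
        linarith
  refine ⟨hodd, hsign, fun n => ?_⟩
  rcases Nat.eq_zero_or_pos n with rfl | hn
  · simp [h0]
  · intro hz
    have hz' : a (2 * n) = 0 := hz
    have := hsign n hn
    rw [hz', mul_zero] at this
    exact lt_irrefl 0 this
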